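/- Let N ≥ 2. For every K > 0 there exists K' = K'(K,N) such that, if Ω is an open subset of ℝ^N with λ₁(Ω) ≤ K, then there exist two disjoint open subsets Ω₁, Ω₂ of Ω with λ₁(Ω₁) ≤ K' and λ₁(Ω₂) ≤ K'. -/

import Mathlib

open MeasureTheory Set
open scoped ENNReal

noncomputable section

namespace SpectralMin

/-- Points of `ℝ^N`. -/
abbrev EucN (N : ℕ) := EuclideanSpace ℝ (Fin N)

variable {N : ℕ}

/-- The squared Euclidean norm `|Du(z)|²` of the gradient of `u` at `z`. -/
def gradSqE (u : EucN N → ℝ) (z : EucN N) : ℝ :=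
  ∑ p : Fin N, (fderiv ℝ u z (EuclideanSpace.single p 1)) ^ 2

/-- The Rayleigh quotient `R(u, D) = (∫_D |Du|²) / (∫_D u²)`. -/
def rayleighE (D : Set (EucN N)) (u : EucN N → ℝ) : ℝ :=
  (∫ z in D, gradSqE u z) / (∫ z in D, (u z) ^ 2)

/-- Test functions for `Ω`: smooth functions compactly supported inside `Ω`. -/
def IsTestE (Ω : Set (EucN N)) (φ : EucN N → ℝ) : Prop :=
  ContDiff ℝ (⊤ : ℕ∞) φ ∧ HasCompactSupport φ ∧ tsupport φ ⊆ Ω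

/-- The `k`-th Dirichlet eigenvalue `λ_k(Ω)` of an open set `Ω ⊆ ℝ^N`, via the min-max
(Courant–Fischer) principle over `k`-dimensional subspaces of `C_c^∞(Ω) ⊆ W^{1,2}_0(Ω)`. -/
def eigenvalE (Ω : Set (EucN N)) (k : ℕ) : ℝ :=
  sInf { c : ℝ | ∃ u : Fin k → EucN N → ℝ, (∀ i, IsTestE Ω (u i)) ∧ LinearIndependent ℝ u ∧
    ∀ β : Fin k → ℝ, β ≠ 0 → rayleighE univ (fun z => ∑ i, β i * u i z) ≤ c }

lemma gradSqE_nonneg (u : EucN N → ℝ) (z : EucN N) : 0 ≤ gradSqE u z :=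
  Finset.sum_nonneg fun _ _ => sq_nonneg _

lemma gradSqE_continuous {u : EucN N → ℝ} (hu : ContDiff ℝ (⊤ : ℕ∞) u) :
    Continuous (gradSqE u) := by
  apply continuous_finset_sum
  intro p _
  exact ((hu.continuous_fderiv (by simp)).clm_apply continuous_const).pow 2

lemma fderiv_eq_zero_of_nmem {u : EucN N → ℝ} {x : EucN N} (hx : x ∉ tsupport u) :
    fderiv ℝ u x = 0 := by
  have : u =ᶠ[nhds x] (fun _ => 0) := by
    have hop : IsOpen (tsupport u)ᶜ := (isClosed_tsupport u).isOpen_compl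
    filter_upwards [hop.mem_nhds hx] with y hy
    exact image_eq_zero_of_notMem_tsupport hy
  rw [Filter.EventuallyEq.fderiv_eq this, fderiv_fun_const]; rfl

lemma gradSqE_hasCompactSupport {u : EucN N → ℝ} (hu : HasCompactSupport u) :
    HasCompactSupport (gradSqE u) := by
  apply HasCompactSupport.intro hu
  intro x hx
  simp [gradSqE, fderiv_eq_zero_of_nmem hx]

lemma sq_hasCompactSupport {u : EucN N → ℝ} (hs : HasCompactSupport u) :
    HasCompactSupport (fun z => (u z) ^ 2) := by
  apply HasCompactSupport.intro hs
  intro x hx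
  simp [image_eq_zero_of_notMem_tsupport hx]

lemma sq_integrable {u : EucN N → ℝ} (hc : Continuous u) (hs : HasCompactSupport u) :
    Integrable (fun z => (u z) ^ 2) (volume : Measure (EucN N)) :=
  (hc.pow 2).integrable_of_hasCompactSupport (sq_hasCompactSupport hs)

lemma gradSq_integrable {u : EucN N → ℝ} (hu : ContDiff ℝ (⊤ : ℕ∞) u)
    (hs : HasCompactSupport u) :
    Integrable (gradSqE u) (volume : Measure (EucN N)) :=
  (gradSqE_continuous hu).integrable_of_hasCompactSupport (gradSqE_hasCompactSupport hs)


lemma rayleigh_nonneg (D : Set (EucN N)) (u : EucN N → ℝ) : 0 ≤ rayleighE D u := by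
  apply div_nonneg
  · exact integral_nonneg (fun z => gradSqE_nonneg u z)
  · exact integral_nonneg (fun z => sq_nonneg _)

lemma eigen_bddBelow (Ω : Set (EucN N)) (k : ℕ) (hk : 0 < k) :
    BddBelow { c : ℝ | ∃ u : Fin k → EucN N → ℝ, (∀ i, IsTestE Ω (u i)) ∧ LinearIndependent ℝ u ∧
      ∀ β : Fin k → ℝ, β ≠ 0 → rayleighE univ (fun z => ∑ i, β i * u i z) ≤ c } := by
  refine ⟨0, fun c hc => ?_⟩
  obtain ⟨u, -, -, hβ⟩ := hc
  have h1 : (fun _ : Fin k => (1:ℝ)) ≠ 0 := by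
    intro h0
    have := congrFun h0 ⟨0, hk⟩
    norm_num at this
  exact le_trans (rayleigh_nonneg _ _) (hβ _ h1)

lemma gradSqE_const_mul {u : EucN N → ℝ} (hu : ContDiff ℝ (⊤ : ℕ∞) u) (c : ℝ) (z : EucN N) :
    gradSqE (fun w => c * u w) z = c ^ 2 * gradSqE u z := by
  unfold gradSqE
  rw [Finset.mul_sum]
  apply Finset.sum_congr rfl
  intro p _
  rw [fderiv_const_mul (hu.differentiable (by simp)).differentiableAt c]
  simp [mul_pow]

lemma rayleigh_const_mul {u : EucN N → ℝ} (hu : ContDiff ℝ (⊤ : ℕ∞) u) {c : ℝ} (hc : c ≠ 0) :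
    rayleighE univ (fun w => c * u w) = rayleighE univ u := by
  unfold rayleighE
  rw [setIntegral_univ, setIntegral_univ, setIntegral_univ, setIntegral_univ]
  have h1 : (∫ z, gradSqE (fun w => c * u w) z) = c^2 * ∫ z, gradSqE u z := by
    rw [← integral_const_mul]
    exact integral_congr_ae (Filter.Eventually.of_forall fun z => gradSqE_const_mul hu c z)
  have h2 : (∫ z, (c * u z)^2) = c^2 * ∫ z, (u z)^2 := by
    rw [← integral_const_mul]
    apply integral_congr_ae (Filter.Eventually.of_forall fun z => ?_)
    ring
  rw [h1, h2, mul_div_mul_left _ _ (pow_ne_zero 2 hc)]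

/-- Upper bound for the first eigenvalue by a single nonzero test function. -/
lemma eigen_le_rayleigh {Ω : Set (EucN N)} {φ : EucN N → ℝ}
    (ht : IsTestE Ω φ) (hne : φ ≠ 0) :
    eigenvalE Ω 1 ≤ rayleighE univ φ := by
  apply csInf_le (eigen_bddBelow Ω 1 one_pos)
  refine ⟨fun _ => φ, fun _ => ht, linearIndependent_unique_iff.2 hne, ?_⟩
  intro β hβ
  have hβ0 : β 0 ≠ 0 := by
    intro h0
    apply hβ; funext i
    have : i = 0 := Subsingleton.elim _ _
    rw [this, h0]; rfl
  have : (fun z => ∑ i : Fin 1, β i * φ z) = fun z => β 0 * φ z := by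
    funext z; simp [Fin.sum_univ_one]
  rw [this, rayleigh_const_mul ht.1 hβ0]

/-- Extraction: from `λ₁(Ω) ≤ K`, get a single nonzero test function with Rayleigh quotient
`< K + 1`. -/
lemma exists_good_test {Ω : Set (EucN N)} (hΩ : IsOpen Ω) (hne : Ω.Nonempty) {K : ℝ}
    (hK : eigenvalE Ω 1 ≤ K) :
    ∃ φ : EucN N → ℝ, IsTestE Ω φ ∧ φ ≠ 0 ∧ rayleighE univ φ < K + 1 := by
  classical
  -- the defining set is nonempty, via a bump function
  obtain ⟨x, hx⟩ := hne
  obtain ⟨r, hr, hball⟩ := Metric.isOpen_iff.1 hΩ x hx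
  have hcb : Metric.closedBall x (r/2) ⊆ Ω :=
    (Metric.closedBall_subset_ball (by linarith)).trans hball
  let f : ContDiffBump x := ⟨r/4, r/2, by positivity, by linarith⟩
  have htest : IsTestE Ω (f : EucN N → ℝ) := by
    refine ⟨?_, f.hasCompactSupport, ?_⟩
    · exact f.contDiff
    · rw [f.tsupport_eq]; exact hcb
  have hfne : (f : EucN N → ℝ) ≠ 0 := by
    intro h0
    have : (f : EucN N → ℝ) x = 1 := f.one_of_mem_closedBall (Metric.mem_closedBall_self (by positivity))
    rw [h0] at this
    norm_num at this
  set S := { c : ℝ | ∃ u : Fin 1 → EucN N → ℝ, (∀ i, IsTestE Ω (u i)) ∧ LinearIndependent ℝ u ∧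
    ∀ β : Fin 1 → ℝ, β ≠ 0 → rayleighE univ (fun z => ∑ i, β i * u i z) ≤ c } with hS
  have hSne : S.Nonempty := by
    refine ⟨rayleighE univ f, fun _ => f, fun _ => htest, linearIndependent_unique_iff.2 hfne, ?_⟩
    intro β hβ
    have hβ0 : β 0 ≠ 0 := by
      intro h0
      apply hβ; funext i
      have : i = 0 := Subsingleton.elim _ _
      rw [this, h0]; rfl
    have : (fun z => ∑ i : Fin 1, β i * (f : EucN N → ℝ) z) = fun z => β 0 * f z := by
      funext z; simp [Fin.sum_univ_one]
    rw [this, rayleigh_const_mul htest.1 hβ0]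
  have hlt : sInf S < K + 1 := lt_of_le_of_lt hK (by linarith)
  obtain ⟨c, hcS, hcK⟩ := (csInf_lt_iff (eigen_bddBelow Ω 1 one_pos) hSne).1 hlt
  obtain ⟨u, hut, hli, hβ⟩ := hcS
  refine ⟨u 0, hut 0, hli.ne_zero 0, ?_⟩
  have h1 : (fun _ : Fin 1 => (1:ℝ)) ≠ 0 := by
    intro h0; have := congrFun h0 0; norm_num at this
  have := hβ _ h1
  have heq : (fun z => ∑ i : Fin 1, (1:ℝ) * u i z) = u 0 := by
    funext z; simp [Fin.sum_univ_one]
  rw [heq] at this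
  exact lt_of_le_of_lt this hcK

section Slab
variable {u : EucN N → ℝ}

lemma coord_add_smul (i : Fin N) (z : EucN N) (h : ℝ) :
    (z + h • EuclideanSpace.single i (1:ℝ)) i = z i + h := by
  simp [PiLp.add_apply, PiLp.smul_apply, EuclideanSpace.single_apply]

lemma coord_meas (i : Fin N) (t : ℝ) : MeasurableSet {z : EucN N | z i ≤ t} :=
  measurableSet_le (EuclideanSpace.proj (𝕜 := ℝ) i).continuous.measurable measurable_const

lemma translate_setIntegral (i : Fin N) (t h : ℝ) :
    ∫ z in {z : EucN N | z i ≤ t + h}, u (z - h • EuclideanSpace.single i (1:ℝ)) ^ 2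
      = ∫ z in {z : EucN N | z i ≤ t}, u z ^ 2 := by
  set e := EuclideanSpace.single i (1:ℝ) with he
  rw [← integral_indicator (coord_meas i (t+h)), ← integral_indicator (coord_meas i t)]
  rw [← integral_add_right_eq_self
    (fun z => Set.indicator {z : EucN N | z i ≤ t+h} (fun z => u (z - h • e)^2) z) (h • e)]
  congr 1; funext z
  by_cases hz : z i ≤ t
  · have h1 : z + h • e ∈ {z : EucN N | z i ≤ t + h} := by
      rw [mem_setOf_eq, coord_add_smul]; linarith
    have h2 : z ∈ {z : EucN N | z i ≤ t} := hz
    rw [Set.indicator_of_mem h1, Set.indicator_of_mem h2]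
    simp
  · have h1 : z + h • e ∉ {z : EucN N | z i ≤ t + h} := by
      rw [mem_setOf_eq, coord_add_smul]; intro hc; exact hz (by linarith)
    have h2 : z ∉ {z : EucN N | z i ≤ t} := hz
    rw [Set.indicator_of_notMem h1, Set.indicator_of_notMem h2]

lemma ftc_pointwise (hu : ContDiff ℝ (⊤:ℕ∞) u) (i : Fin N) {h : ℝ} (hh : 0 ≤ h) (z : EucN N) :
    u z ^ 2 - u (z - h • EuclideanSpace.single i (1:ℝ)) ^ 2
      ≤ ∫ r in Ioc (0:ℝ) h, (u (z - r • EuclideanSpace.single i (1:ℝ)) ^ 2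
          + (fderiv ℝ u (z - r • EuclideanSpace.single i (1:ℝ)) (EuclideanSpace.single i (1:ℝ))) ^ 2) := by
  set e := EuclideanSpace.single i (1:ℝ) with he
  have hdiff := hu.differentiable (by simp)
  have hγc : Continuous (fun r : ℝ => z - r • e) :=
    continuous_const.sub (continuous_id.smul continuous_const)
  have hψ : ∀ r : ℝ, HasDerivAt (fun s => u (z - s • e) ^ 2)
      (2 * u (z - r • e) ^ 1 * (fderiv ℝ u (z - r • e) (-e))) r := by
    intro r
    have hγ : HasDerivAt (fun s : ℝ => z - s • e) (-e) r := by
      simpa using ((hasDerivAt_id r).smul_const e).const_sub z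
    have h1 : HasDerivAt (fun s : ℝ => u (z - s • e)) (fderiv ℝ u (z - r • e) (-e)) r :=
      (hdiff (z - r • e)).hasFDerivAt.comp_hasDerivAt r hγ
    have := h1.pow 2
    norm_num at this ⊢
    exact this
  have hcont : Continuous (fun r : ℝ => 2 * u (z - r • e) ^ 1 * (fderiv ℝ u (z - r • e) (-e))) := by
    apply Continuous.mul
    · exact continuous_const.mul ((hu.continuous.comp hγc).pow 1)
    · exact ((hu.continuous_fderiv (by simp)).comp hγc).clm_apply continuous_const
  have key : (∫ r in (0:ℝ)..h, 2 * u (z - r • e) ^ 1 * (fderiv ℝ u (z - r • e) (-e)))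
      = u (z - h • e) ^ 2 - u (z - (0:ℝ) • e) ^ 2 :=
    intervalIntegral.integral_eq_sub_of_hasDerivAt (fun r _ => hψ r) (hcont.intervalIntegrable 0 h)
  have h0 : u (z - (0:ℝ) • e) = u z := by norm_num
  have step : u z ^ 2 - u (z - h • e) ^ 2
      = ∫ r in (0:ℝ)..h, -(2 * u (z - r • e) ^ 1 * (fderiv ℝ u (z - r • e) (-e))) := by
    rw [intervalIntegral.integral_neg, key, h0]; ring
  rw [step, ← intervalIntegral.integral_of_le hh]
  apply intervalIntegral.integral_mono_on hh (hcont.neg.intervalIntegrable 0 h)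
  · apply Continuous.intervalIntegrable
    apply Continuous.add
    · exact (hu.continuous.comp hγc).pow 2
    · exact (((hu.continuous_fderiv (by simp)).comp hγc).clm_apply continuous_const).pow 2
  · intro r _
    have hmap : (fderiv ℝ u (z - r • e)) (-e) = -((fderiv ℝ u (z - r • e)) e) :=
      (fderiv ℝ u (z - r • e)).map_neg e
    rw [Pi.neg_apply, hmap]
    have := two_mul_le_add_sq (u (z - r • e)) ((fderiv ℝ u (z - r • e)) e)
    nlinarith [this]

end Slab

section Slab2
variable {u : EucN N → ℝ}

/-- The integrand `u² + (∂ᵢu)²`. -/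
def wFn (u : EucN N → ℝ) (i : Fin N) (z : EucN N) : ℝ :=
  u z ^ 2 + (fderiv ℝ u z (EuclideanSpace.single i (1:ℝ))) ^ 2

lemma wFn_nonneg (i : Fin N) (z : EucN N) : 0 ≤ wFn u i z :=
  add_nonneg (sq_nonneg _) (sq_nonneg _)

lemma wFn_continuous (hu : ContDiff ℝ (⊤:ℕ∞) u) (i : Fin N) : Continuous (wFn u i) :=
  (hu.continuous.pow 2).add
    (((hu.continuous_fderiv (by simp)).clm_apply continuous_const).pow 2)

lemma wFn_hasCompactSupport (hs : HasCompactSupport u) (i : Fin N) :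
    HasCompactSupport (wFn u i) := by
  apply HasCompactSupport.intro hs
  intro x hx
  simp [wFn, image_eq_zero_of_notMem_tsupport hx, fderiv_eq_zero_of_nmem hx]

/-- Key slab estimate: moving the threshold by `h ≥ 0` increases the mass by at most
`h`-times the total of `u² + (∂ᵢ u)²`. -/
lemma slab_bound (hu : ContDiff ℝ (⊤:ℕ∞) u) (hs : HasCompactSupport u) (i : Fin N)
    (t : ℝ) {h : ℝ} (hh : 0 ≤ h) :
    (∫ z in {z : EucN N | z i ≤ t + h}, u z ^ 2)
      ≤ (∫ z in {z : EucN N | z i ≤ t}, u z ^ 2) + h * (∫ z, wFn u i z) := by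
  classical
  set e := EuclideanSpace.single i (1:ℝ) with he
  have he1 : ‖e‖ = 1 := by rw [he, EuclideanSpace.norm_single]; norm_num
  set A : Set (EucN N) := {z : EucN N | z i ≤ t + h} with hA
  have hAmeas : MeasurableSet A := coord_meas i (t+h)
  -- integrability of the two pieces
  have hIu : Integrable (fun z : EucN N => u z ^ 2) volume := sq_integrable hu.continuous hs
  have hγc : Continuous (fun z : EucN N => z - h • e) := continuous_id.sub continuous_const
  have hIus : Integrable (fun z : EucN N => u (z - h • e) ^ 2) volume := by
    have : (fun z : EucN N => u (z - h • e) ^ 2) = fun z => ((fun w => u w ^ 2) (z - h • e)) := rfl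
    rw [this]
    exact (hIu.comp_sub_right (h • e))
  -- the difference identity
  have hdiff : (∫ z in A, u z ^ 2) - (∫ z in {z : EucN N | z i ≤ t}, u z ^ 2)
      = ∫ z in A, (u z ^ 2 - u (z - h • e) ^ 2) := by
    rw [← translate_setIntegral i t h]
    rw [integral_sub (hIu.integrableOn) (hIus.integrableOn)]
  -- Fubini setup
  set F : EucN N × ℝ → ℝ := fun p =>
    Set.indicator ((univ : Set (EucN N)) ×ˢ Ioc (0:ℝ) h) (fun q => wFn u i (q.1 - q.2 • e)) p with hF
  have hGcont : Continuous (fun q : EucN N × ℝ => wFn u i (q.1 - q.2 • e)) :=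
    (wFn_continuous hu i).comp (continuous_fst.sub (continuous_snd.smul continuous_const))
  have hprodmeas : MeasurableSet ((univ : Set (EucN N)) ×ˢ Ioc (0:ℝ) h) :=
    MeasurableSet.univ.prod measurableSet_Ioc
  obtain ⟨R, hR⟩ := ((wFn_hasCompactSupport hs i).isBounded).subset_closedBall 0
  obtain ⟨C, hC⟩ := (wFn_hasCompactSupport hs i).exists_bound_of_continuous (wFn_continuous hu i)
  have hC0 : 0 ≤ C := le_trans (norm_nonneg _) (hC 0)
  have hFint : Integrable F (volume.prod volume) := by
    apply Integrable.mono'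
      (g := Set.indicator ((Metric.closedBall (0:EucN N) (R + |h| + 1)) ×ˢ Ioc (0:ℝ) h) (fun _ => C))
    · rw [integrable_indicator_iff ((measurableSet_closedBall).prod measurableSet_Ioc)]
      refine integrableOn_const ?_
      apply ne_of_lt
      rw [Measure.prod_prod]
      exact ENNReal.mul_lt_top ((isCompact_closedBall _ _)).measure_lt_top
        (by rw [Real.volume_Ioc]; exact ENNReal.ofReal_lt_top)
    · exact hGcont.aestronglyMeasurable.indicator hprodmeas
    · apply Filter.Eventually.of_forall
      intro p
      by_cases hp : F p = 0
      · rw [hp]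
        simp only [norm_zero]
        apply Set.indicator_nonneg (fun _ _ => hC0)
      · have hpmem : p ∈ ((univ : Set (EucN N)) ×ˢ Ioc (0:ℝ) h) := by
          by_contra hc
          exact hp (Set.indicator_of_notMem hc _)
        have hval : F p = wFn u i (p.1 - p.2 • e) := Set.indicator_of_mem hpmem _
        have hw : wFn u i (p.1 - p.2 • e) ≠ 0 := by rw [← hval]; exact hp
        have hsupp : p.1 - p.2 • e ∈ Metric.closedBall (0:EucN N) R := by
          apply hR
          apply subset_tsupport
          exact hw
        have hp2 : p.2 ∈ Ioc (0:ℝ) h := hpmem.2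
        have hp1 : p.1 ∈ Metric.closedBall (0:EucN N) (R + |h| + 1) := by
          rw [Metric.mem_closedBall] at hsupp ⊢
          have : ‖p.1‖ ≤ ‖p.1 - p.2 • e‖ + ‖p.2 • e‖ := by
            have heq : p.1 - p.2 • e + p.2 • e = p.1 := by abel
            calc ‖p.1‖ = ‖(p.1 - p.2 • e) + p.2 • e‖ := by rw [heq]
            _ ≤ ‖p.1 - p.2 • e‖ + ‖p.2 • e‖ := norm_add_le _ _
          have h2 : ‖p.2 • e‖ = |p.2| := by rw [norm_smul, he1]; simp
          have h3 : |p.2| ≤ |h| := by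
            rw [abs_le]
            constructor
            · nlinarith [hp2.1, hp2.2, abs_nonneg h, le_abs_self h]
            · exact le_trans hp2.2 (le_abs_self h)
          simp only [dist_zero_right] at hsupp ⊢
          linarith
        rw [hval, Set.indicator_of_mem (Set.mem_prod.2 ⟨hp1, hp2⟩)]
        exact hC _
  -- swap
  have hswap := integral_integral_swap (f := fun (z : EucN N) (r : ℝ) => F (z, r)) (by exact hFint)
  -- inner right integral
  have hinner : ∀ r : ℝ, (∫ z : EucN N, F (z, r))
      = Set.indicator (Ioc (0:ℝ) h) (fun _ => ∫ z : EucN N, wFn u i z) r := by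
    intro r
    by_cases hr : r ∈ Ioc (0:ℝ) h
    · rw [Set.indicator_of_mem hr]
      have : ∀ z : EucN N, F (z, r) = wFn u i (z - r • e) := by
        intro z
        exact Set.indicator_of_mem (Set.mem_prod.2 ⟨mem_univ _, hr⟩) _
      simp_rw [this]
      exact integral_sub_right_eq_self (wFn u i) (r • e)
    · rw [Set.indicator_of_notMem hr]
      have : ∀ z : EucN N, F (z, r) = 0 := by
        intro z
        apply Set.indicator_of_notMem
        intro hc
        exact hr hc.2
      simp_rw [this]
      exact integral_zero _ _
  have hRHS : (∫ r : ℝ, ∫ z : EucN N, F (z, r)) = h * ∫ z, wFn u i z := by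
    simp_rw [hinner]
    rw [integral_indicator measurableSet_Ioc, setIntegral_const, Real.volume_real_Ioc_of_le hh,
      smul_eq_mul]
    ring
  -- Φ := z ↦ ∫ r, F (z, r) is integrable and dominates the difference
  have hΦint : Integrable (fun z : EucN N => ∫ r : ℝ, F (z, r)) volume := by
    have := hFint.integral_prod_left
    exact this
  have hΦnonneg : ∀ z : EucN N, 0 ≤ ∫ r : ℝ, F (z, r) := by
    intro z
    apply integral_nonneg
    intro r
    apply Set.indicator_nonneg
    intro q _
    exact wFn_nonneg i _
  have hptwise : ∀ z : EucN N, u z ^ 2 - u (z - h • e) ^ 2 ≤ ∫ r : ℝ, F (z, r) := by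
    intro z
    have h1 := ftc_pointwise hu i hh z
    have h2 : (∫ r : ℝ, F (z, r)) = ∫ r in Ioc (0:ℝ) h, wFn u i (z - r • e) := by
      have : ∀ r : ℝ, F (z, r) = Set.indicator (Ioc (0:ℝ) h) (fun s => wFn u i (z - s • e)) r := by
        intro r
        simp only [hF, Set.indicator_apply, Set.mem_prod, mem_univ, true_and]
      simp_rw [this]
      exact integral_indicator measurableSet_Ioc
    rw [h2]
    exact h1
  -- put it together
  have hsub : (∫ z in A, (u z ^ 2 - u (z - h • e) ^ 2)) ≤ ∫ z : EucN N, ∫ r : ℝ, F (z, r) := by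
    calc (∫ z in A, (u z ^ 2 - u (z - h • e) ^ 2))
        ≤ ∫ z in A, (∫ r : ℝ, F (z, r)) := by
          apply setIntegral_mono_on (hIu.integrableOn.sub hIus.integrableOn)
            hΦint.integrableOn hAmeas
          intro z _
          exact hptwise z
      _ ≤ ∫ z : EucN N, ∫ r : ℝ, F (z, r) :=
          setIntegral_le_integral hΦint (Filter.Eventually.of_forall hΦnonneg)
  have hswap' : (∫ z : EucN N, ∫ r : ℝ, F (z, r)) = ∫ r : ℝ, ∫ z : EucN N, F (z, r) := hswap
  rw [hswap', hRHS] at hsub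
  have hfin : (∫ z in A, u z ^ 2) - (∫ z in {z : EucN N | z i ≤ t}, u z ^ 2)
      ≤ h * ∫ z, wFn u i z := by rw [hdiff]; exact hsub
  linarith
end Slab2

section Cutoff
variable {u : EucN N → ℝ} {χ : ℝ → ℝ}

lemma cutoff_contDiff (hu : ContDiff ℝ (⊤:ℕ∞) u) (hχ : ContDiff ℝ (⊤:ℕ∞) χ) (i : Fin N) :
    ContDiff ℝ (⊤:ℕ∞) (fun z : EucN N => χ (z i) * u z) := by
  have h1 : ContDiff ℝ (⊤:ℕ∞) (fun z : EucN N => χ (z i)) :=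
    hχ.comp (EuclideanSpace.proj (𝕜:=ℝ) i).contDiff
  exact h1.mul hu

lemma cutoff_hasCompactSupport (hs : HasCompactSupport u) (i : Fin N) :
    HasCompactSupport (fun z : EucN N => χ (z i) * u z) := by
  apply HasCompactSupport.intro hs
  intro x hx
  simp [image_eq_zero_of_notMem_tsupport hx]

lemma cutoff_fderiv_apply (hu : ContDiff ℝ (⊤:ℕ∞) u) (hχ : ContDiff ℝ (⊤:ℕ∞) χ)
    (i : Fin N) (z : EucN N) (p : Fin N) :
    fderiv ℝ (fun z : EucN N => χ (z i) * u z) z (EuclideanSpace.single p 1)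
      = χ (z i) * (fderiv ℝ u z (EuclideanSpace.single p 1))
        + u z * (deriv χ (z i) * (if i = p then 1 else 0)) := by
  have hχz : HasDerivAt χ (deriv χ (z i)) (z i) :=
    ((hχ.differentiable (by simp)) (z i)).hasDerivAt
  have hproj : HasFDerivAt (fun w : EucN N => w i) (EuclideanSpace.proj i (𝕜 := ℝ)) z :=
    (EuclideanSpace.proj i (𝕜 := ℝ)).hasFDerivAt
  have hcomp : HasFDerivAt (fun w : EucN N => χ (w i))
      (deriv χ (z i) • (EuclideanSpace.proj i (𝕜 := ℝ))) z :=
    hχz.comp_hasFDerivAt z hproj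
  have hmul := hcomp.mul ((hu.differentiable (by simp)) z).hasFDerivAt
  rw [show (fun z : EucN N => χ (z i) * u z) = (fun w : EucN N => χ (w i)) * u from rfl, hmul.fderiv]
  have hprojval : (EuclideanSpace.proj (𝕜 := ℝ) i) (EuclideanSpace.single p 1)
      = (if i = p then (1:ℝ) else 0) := by
    have : (EuclideanSpace.proj (𝕜 := ℝ) i) (EuclideanSpace.single p 1)
        = (EuclideanSpace.single p (1:ℝ)) i := rfl
    rw [this, EuclideanSpace.single_apply]
  simp only [ContinuousLinearMap.add_apply, ContinuousLinearMap.smul_apply, hprojval,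
    smul_eq_mul]

lemma cutoff_gradSq_le (hu : ContDiff ℝ (⊤:ℕ∞) u) (hχ : ContDiff ℝ (⊤:ℕ∞) χ)
    (hχ1 : ∀ t, |χ t| ≤ 1) (i : Fin N) (z : EucN N) :
    gradSqE (fun z : EucN N => χ (z i) * u z) z
      ≤ 2 * gradSqE u z + 2 * (deriv χ (z i))^2 * (u z)^2 := by
  unfold gradSqE
  have key : ∀ p : Fin N,
      (fderiv ℝ (fun z : EucN N => χ (z i) * u z) z (EuclideanSpace.single p 1))^2
        ≤ 2 * (fderiv ℝ u z (EuclideanSpace.single p 1))^2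
          + (if i = p then 2 * (deriv χ (z i))^2 * (u z)^2 else 0) := by
    intro p
    rw [cutoff_fderiv_apply hu hχ i z p]
    have h1 : (χ (z i))^2 ≤ 1 := by
      nlinarith [hχ1 (z i), sq_abs (χ (z i)), abs_nonneg (χ (z i))]
    have h2 : (0:ℝ) ≤ (1 - (χ (z i))^2) * (fderiv ℝ u z (EuclideanSpace.single p 1))^2 :=
      mul_nonneg (by linarith) (sq_nonneg _)
    by_cases h : i = p
    · rw [if_pos h, if_pos h]
      nlinarith [sq_nonneg (χ (z i) * (fderiv ℝ u z (EuclideanSpace.single p 1))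
        - u z * deriv χ (z i)), sq_nonneg (u z * deriv χ (z i))]
    · rw [if_neg h, if_neg h]
      simp only [mul_zero, add_zero]
      nlinarith [sq_nonneg (fderiv ℝ u z (EuclideanSpace.single p 1))]
  calc (∑ p : Fin N, (fderiv ℝ (fun z : EucN N => χ (z i) * u z) z (EuclideanSpace.single p 1))^2)
      ≤ ∑ p : Fin N, (2 * (fderiv ℝ u z (EuclideanSpace.single p 1))^2
          + (if i = p then 2 * (deriv χ (z i))^2 * (u z)^2 else 0)) :=
        Finset.sum_le_sum (fun p _ => key p)
    _ = 2 * (∑ p : Fin N, (fderiv ℝ u z (EuclideanSpace.single p 1))^2)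
          + 2 * (deriv χ (z i))^2 * (u z)^2 := by
        rw [Finset.sum_add_distrib, ← Finset.mul_sum, Finset.sum_ite_eq]
        simp
end Cutoff

section Helpers
variable {u : EucN N → ℝ}

lemma deriv_zero_on {f : ℝ → ℝ} {s : Set ℝ} {x c : ℝ} (hs : IsOpen s) (hx : x ∈ s)
    (hf : ∀ y ∈ s, f y = c) : deriv f x = 0 := by
  have h : f =ᶠ[nhds x] fun _ => c := by
    filter_upwards [hs.mem_nhds hx] with y hy using hf y hy
  rw [Filter.EventuallyEq.deriv_eq h, deriv_const]

lemma abs_coord_le_norm (z : EucN N) (i : Fin N) : |z i| ≤ ‖z‖ := by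
  rw [EuclideanSpace.norm_eq, ← Real.sqrt_sq_eq_abs]
  apply Real.sqrt_le_sqrt
  have : |z i| ^ 2 ≤ ∑ j : Fin N, ‖z j‖ ^ 2 := by
    have := Finset.single_le_sum (f := fun j : Fin N => ‖z j‖ ^ 2)
      (fun j _ => sq_nonneg _) (Finset.mem_univ i)
    simpa [Real.norm_eq_abs, sq_abs] using this
  simpa [sq_abs] using this

lemma st_bound : ∃ M : ℝ, 0 ≤ M ∧ ∀ x, |deriv Real.smoothTransition x| ≤ M := by
  have hcd : ContDiff ℝ (⊤:ℕ∞) Real.smoothTransition := Real.smoothTransition.contDiff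
  have hcont : Continuous (deriv Real.smoothTransition) :=
    hcd.continuous_deriv (by exact_mod_cast le_top)
  have hcs : HasCompactSupport (deriv Real.smoothTransition) := by
    apply HasCompactSupport.intro isCompact_Icc (K := Icc (0:ℝ) 1)
    intro x hx
    rw [mem_Icc, not_and_or] at hx
    rcases hx with h | h
    · have h' : x < 0 := lt_of_not_ge h
      exact deriv_zero_on isOpen_Iio h'
        (fun y hy => Real.smoothTransition.zero_of_nonpos (le_of_lt hy))
    · have h' : 1 < x := lt_of_not_ge h
      exact deriv_zero_on isOpen_Ioi h'
        (fun y hy => Real.smoothTransition.one_of_one_le (le_of_lt hy))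
  obtain ⟨C, hC⟩ := hcs.exists_bound_of_continuous hcont
  exact ⟨C, le_trans (norm_nonneg _) (hC 0), fun x => by simpa [Real.norm_eq_abs] using hC x⟩

lemma fderivSq_integrable (hu : ContDiff ℝ (⊤:ℕ∞) u) (hs : HasCompactSupport u) (i : Fin N) :
    Integrable (fun z : EucN N => (fderiv ℝ u z (EuclideanSpace.single i 1)) ^ 2) volume := by
  apply Continuous.integrable_of_hasCompactSupport
  · exact ((hu.continuous_fderiv (by simp)).clm_apply continuous_const).pow 2
  · apply HasCompactSupport.intro hs
    intro x hx
    simp [fderiv_eq_zero_of_nmem hx]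

lemma wFn_total_le (hu : ContDiff ℝ (⊤:ℕ∞) u) (hs : HasCompactSupport u) (i : Fin N) :
    (∫ z, wFn u i z) ≤ (∫ z : EucN N, u z ^ 2) + ∫ z, gradSqE u z := by
  have h1 : (∫ z, wFn u i z)
      = (∫ z : EucN N, u z ^ 2) + ∫ z, (fderiv ℝ u z (EuclideanSpace.single i 1)) ^ 2 := by
    unfold wFn
    exact integral_add (sq_integrable hu.continuous hs) (fderivSq_integrable hu hs i)
  rw [h1]
  have h2 : (∫ z, (fderiv ℝ u z (EuclideanSpace.single i 1)) ^ 2) ≤ ∫ z, gradSqE u z := by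
    apply integral_mono (fderivSq_integrable hu hs i) (gradSq_integrable hu hs)
    intro z
    exact Finset.single_le_sum (f := fun p : Fin N => (fderiv ℝ u z (EuclideanSpace.single p 1))^2)
      (fun p _ => sq_nonneg _) (Finset.mem_univ i)
  linarith

lemma coord_band_meas (i : Fin N) (lo hi : ℝ) :
    MeasurableSet {z : EucN N | lo < z i ∧ z i ≤ hi} :=
  (measurableSet_lt measurable_const (EuclideanSpace.proj (𝕜 := ℝ) i).continuous.measurable).inter (coord_meas i hi)

lemma setInt_split (hI : Integrable (fun z : EucN N => u z ^ 2) volume) (i : Fin N)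
    {lo hi : ℝ} (h : lo ≤ hi) :
    (∫ z in {z : EucN N | z i ≤ lo}, u z ^ 2)
      + (∫ z in {z : EucN N | lo < z i ∧ z i ≤ hi}, u z ^ 2)
      = ∫ z in {z : EucN N | z i ≤ hi}, u z ^ 2 := by
  have hset : {z : EucN N | z i ≤ lo} ∪ {z : EucN N | lo < z i ∧ z i ≤ hi}
      = {z : EucN N | z i ≤ hi} := by
    ext z
    simp only [mem_union, mem_setOf_eq]
    constructor
    · rintro (h1 | ⟨-, h2⟩)
      · linarith
      · exact h2
    · intro h1
      by_cases h2 : z i ≤ lo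
      · exact Or.inl h2
      · exact Or.inr ⟨by linarith, h1⟩
  have hdisj : Disjoint {z : EucN N | z i ≤ lo} {z : EucN N | lo < z i ∧ z i ≤ hi} := by
    rw [Set.disjoint_left]
    rintro z hz ⟨h1, -⟩
    exact absurd hz (not_le.2 h1)
  have := setIntegral_union hdisj (coord_band_meas i lo hi)
    (hI.integrableOn (s := {z : EucN N | z i ≤ lo}))
    (hI.integrableOn (s := {z : EucN N | lo < z i ∧ z i ≤ hi}))
  rw [hset] at this
  linarith

lemma setInt_split_compl (hI : Integrable (fun z : EucN N => u z ^ 2) volume) (i : Fin N)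
    (c : ℝ) :
    (∫ z in {z : EucN N | z i ≤ c}, u z ^ 2) + (∫ z in {z : EucN N | c < z i}, u z ^ 2)
      = ∫ z : EucN N, u z ^ 2 := by
  have hset : {z : EucN N | z i ≤ c} ∪ {z : EucN N | c < z i} = (univ : Set (EucN N)) := by
    ext z
    simp only [mem_union, mem_setOf_eq, mem_univ, iff_true]
    exact le_or_gt (z i) c
  have hdisj : Disjoint {z : EucN N | z i ≤ c} {z : EucN N | c < z i} := by
    rw [Set.disjoint_left]
    intro z hz h1
    have h2 : z i ≤ c := hz
    have h3 : c < z i := h1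
    linarith
  have := setIntegral_union hdisj
    (measurableSet_lt measurable_const (EuclideanSpace.proj (𝕜 := ℝ) i).continuous.measurable)
    (hI.integrableOn (s := {z : EucN N | z i ≤ c}))
    (hI.integrableOn (s := {z : EucN N | c < z i}))
  rw [hset, setIntegral_univ] at this
  linarith
end Helpers


set_option maxHeartbeats 1000000 in
/-- Lemma `startingcase`. For every `K > 0` there exists
`K' = K'(K,N)` such that, if `Ω ⊆ ℝ^N` is open with `λ₁(Ω) ≤ K`, then there are two
disjoint (nonempty) open subsets `Ω₁, Ω₂ ⊆ Ω` with `λ₁(Ω₁) ≤ K'` and `λ₁(Ω₂) ≤ K'`. -/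
theorem split_into_two_pieces
    (N : ℕ) (hN : 2 ≤ N) (K : ℝ) (hK : 0 < K) :
    ∃ K' : ℝ, 0 < K' ∧
      ∀ Ω : Set (EucN N), IsOpen Ω → Ω.Nonempty → eigenvalE Ω 1 ≤ K →
      ∃ Ω₁ Ω₂ : Set (EucN N),
        IsOpen Ω₁ ∧ IsOpen Ω₂ ∧ Ω₁ ⊆ Ω ∧ Ω₂ ⊆ Ω ∧ Disjoint Ω₁ Ω₂ ∧
        Ω₁.Nonempty ∧ Ω₂.Nonempty ∧
        eigenvalE Ω₁ 1 ≤ K' ∧ eigenvalE Ω₂ 1 ≤ K' := by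
  classical
  obtain ⟨M, hM0, hM⟩ := st_bound
  refine ⟨3 * (2*(K+1) + 96 * M^2 * (K+2)^2) + 1,
    by nlinarith [sq_nonneg M, sq_nonneg (K+2)], ?_⟩
  intro Ω hΩ hΩne hlam
  obtain ⟨u, hut, hune, hray⟩ := exists_good_test hΩ hΩne hlam
  obtain ⟨hsm, hcs, hsub⟩ := hut
  have hNpos : 0 < N := by omega
  set i : Fin N := ⟨0, hNpos⟩ with hidef
  have hcoord : Continuous (fun z : EucN N => z i) := (EuclideanSpace.proj (𝕜 := ℝ) i).continuous
  set T := ∫ z : EucN N, u z ^ 2 with hTdef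
  set E := ∫ z, gradSqE u z with hEdef
  have hIu : Integrable (fun z : EucN N => u z ^ 2) volume := sq_integrable hsm.continuous hcs
  have hT0 : 0 < T := by
    rw [hTdef, integral_pos_iff_support_of_nonneg (fun z => sq_nonneg _) hIu]
    have hsupp : Function.support (fun z : EucN N => u z ^ 2) = Function.support u := by
      ext z
      simp [Function.mem_support, pow_eq_zero_iff]
    rw [hsupp]
    exact (hsm.continuous.isOpen_support).measure_pos volume
      (Function.support_nonempty_iff.2 hune)
  have hE0 : 0 ≤ E := integral_nonneg (gradSqE_nonneg u)
  have hEK : E ≤ (K+1) * T := by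
    have hreq : rayleighE univ u = E / T := by
      unfold rayleighE
      rw [setIntegral_univ, setIntegral_univ]
    rw [hreq, div_lt_iff₀ hT0] at hray
    nlinarith
  set Wi := ∫ z, wFn u i z with hWidef
  have hWle : Wi ≤ (K+2) * T := le_trans (wFn_total_le hsm hcs i) (by nlinarith)
  have hWnn : 0 ≤ Wi := integral_nonneg (wFn_nonneg i)
  set δ : ℝ := 1 / (24 * (K+2)) with hδdef
  have hδ0 : 0 < δ := by rw [hδdef]; positivity
  have hδW : δ * Wi ≤ T / 24 := by
    have h1 : δ * Wi ≤ δ * ((K+2)*T) := by nlinarith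
    have h2 : δ * ((K+2)*T) = T/24 := by
      rw [hδdef]; field_simp
    linarith
  have h1δ : 1/δ = 24*(K+2) := by
    rw [hδdef]; rw [one_div_one_div]
  -- the distribution function
  set F : ℝ → ℝ := fun t => ∫ z in {z : EucN N | z i ≤ t}, u z ^ 2 with hFdef
  have hFmono : ∀ {s t : ℝ}, s ≤ t → F s ≤ F t := by
    intro s t hst
    apply setIntegral_mono_set hIu.integrableOn
      (Filter.Eventually.of_forall (fun z => sq_nonneg _))
    apply HasSubset.Subset.eventuallyLE
    intro z hz
    exact le_trans hz hst
  have hslab : ∀ (t : ℝ) {h : ℝ}, 0 ≤ h → F (t + h) ≤ F t + h * Wi :=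
    fun t h hh => slab_bound hsm hcs i t hh
  -- the support radius
  obtain ⟨R, hR0⟩ := hcs.isBounded.subset_closedBall 0
  have hR : tsupport u ⊆ Metric.closedBall 0 (|R|) :=
    hR0.trans (Metric.closedBall_subset_closedBall (le_abs_self R))
  have huz : ∀ z : EucN N, |R| < |z i| → u z = 0 := by
    intro z hz
    by_contra hne0
    have hmem : z ∈ tsupport u := subset_tsupport u hne0
    have := hR hmem
    rw [Metric.mem_closedBall, dist_zero_right] at this
    have := abs_coord_le_norm z i
    linarith
  -- the set S and its infimum a
  set S : Set ℝ := {t | T/3 ≤ F t} with hSdef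
  have hST : F (|R|+1) = T := by
    have hsplit := setInt_split_compl hIu i (|R|+1)
    have hzero : (∫ z in {z : EucN N | (|R|+1) < z i}, u z ^ 2) = 0 := by
      apply setIntegral_eq_zero_of_forall_eq_zero
      intro z hz
      have : |R| < |z i| := by
        have : (|R|+1) < z i := hz
        have := le_abs_self (z i)
        linarith
      rw [huz z this]
      ring
    rw [hzero] at hsplit
    rw [hFdef]
    linarith
  have hSne : S.Nonempty := ⟨|R|+1, by rw [hSdef, mem_setOf_eq, hST]; linarith⟩
  have hSbdd : BddBelow S := by
    refine ⟨-(|R|+2), fun t ht => ?_⟩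
    by_contra hc
    push_neg at hc
    have hFt : F t = 0 := by
      apply setIntegral_eq_zero_of_forall_eq_zero
      intro z hz
      have h1 : z i ≤ t := hz
      have h2 : |R| < |z i| := by
        have h3 := neg_abs_le (z i)
        linarith
      rw [huz z h2]; ring
    have : T/3 ≤ F t := ht
    rw [hFt] at this
    linarith
  set a := sInf S with hadef
  have hFlt : ∀ t, t < a → F t < T/3 := by
    intro t ht
    by_contra hc
    push_neg at hc
    have : a ≤ t := csInf_le hSbdd hc
    linarith
  have hFge : ∀ ε : ℝ, 0 < ε → T/3 ≤ F (a + ε) := by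
    intro ε hε
    have : sInf S < a + ε := by rw [← hadef]; linarith
    obtain ⟨t, htS, htlt⟩ := (csInf_lt_iff hSbdd hSne).1 this
    exact le_trans htS (hFmono (le_of_lt htlt))
  -- mass estimates
  have hden1 : T/3 ≤ F (a + δ/2) := hFge _ (by positivity)
  have hm1 : F (a + 2*δ) - F (a + δ/2) ≤ T/12 := by
    have h := hslab (a + δ/2) (h := 3*δ/2) (by positivity)
    rw [show a + δ/2 + 3*δ/2 = a + 2*δ by ring] at h
    nlinarith
  have hm2 : F (a + 4*δ) - F (a + 5*δ/2) ≤ T/12 := by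
    have h := hslab (a + 5*δ/2) (h := 3*δ/2) (by positivity)
    rw [show a + 5*δ/2 + 3*δ/2 = a + 4*δ by ring] at h
    nlinarith
  have hFa4 : F (a + 4*δ) ≤ 13*T/24 := by
    have h := hslab (a - δ) (h := 5*δ) (by positivity)
    rw [show a - δ + 5*δ = a + 4*δ by ring] at h
    have h2 : F (a - δ) < T/3 := hFlt _ (by linarith)
    nlinarith
  have hden2 : T/3 ≤ ∫ z in {z : EucN N | a + 4*δ < z i}, u z ^ 2 := by
    have hsplit := setInt_split_compl hIu i (a + 4*δ)
    have : F (a + 4*δ) + (∫ z in {z : EucN N | a + 4*δ < z i}, u z ^ 2) = T := hsplit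
    linarith
  -- cutoff functions
  set χ₁ : ℝ → ℝ := fun t => Real.smoothTransition ((a + 2*δ - t)/δ) with hχ₁def
  set χ₂ : ℝ → ℝ := fun t => Real.smoothTransition ((t - (a + 3*δ))/δ) with hχ₂def
  have hSTcd : ContDiff ℝ (⊤:ℕ∞) Real.smoothTransition := Real.smoothTransition.contDiff
  have hχ₁cd : ContDiff ℝ (⊤:ℕ∞) χ₁ :=
    hSTcd.comp ((contDiff_const.sub contDiff_id).div_const δ)
  have hχ₂cd : ContDiff ℝ (⊤:ℕ∞) χ₂ :=
    hSTcd.comp ((contDiff_id.sub contDiff_const).div_const δ)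
  have hχ₁ab : ∀ t : ℝ, |χ₁ t| ≤ 1 := fun t => abs_le.2
    ⟨by linarith [Real.smoothTransition.nonneg ((a + 2*δ - t)/δ)],
      Real.smoothTransition.le_one _⟩
  have hχ₂ab : ∀ t : ℝ, |χ₂ t| ≤ 1 := fun t => abs_le.2
    ⟨by linarith [Real.smoothTransition.nonneg ((t - (a + 3*δ))/δ)],
      Real.smoothTransition.le_one _⟩
  have hχ₁one : ∀ t : ℝ, t ≤ a + δ → χ₁ t = 1 := by
    intro t ht
    apply Real.smoothTransition.one_of_one_le
    rw [le_div_iff₀ hδ0]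
    linarith
  have hχ₁zero : ∀ t : ℝ, a + 2*δ ≤ t → χ₁ t = 0 := by
    intro t ht
    apply Real.smoothTransition.zero_of_nonpos
    apply div_nonpos_of_nonpos_of_nonneg <;> linarith
  have hχ₂one : ∀ t : ℝ, a + 4*δ ≤ t → χ₂ t = 1 := by
    intro t ht
    apply Real.smoothTransition.one_of_one_le
    rw [le_div_iff₀ hδ0]
    linarith
  have hχ₂zero : ∀ t : ℝ, t ≤ a + 3*δ → χ₂ t = 0 := by
    intro t ht
    apply Real.smoothTransition.zero_of_nonpos
    apply div_nonpos_of_nonpos_of_nonneg <;> linarith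
  -- derivatives of the cutoffs
  have hχ₁d : ∀ t : ℝ, HasDerivAt χ₁
      (deriv Real.smoothTransition ((a + 2*δ - t)/δ) * ((-1)/δ)) t := by
    intro t
    have hin : HasDerivAt (fun s : ℝ => (a + 2*δ - s)/δ) ((-1)/δ) t := by
      simpa using ((hasDerivAt_id t).const_sub (a + 2*δ)).div_const δ
    have hST : HasDerivAt Real.smoothTransition
        (deriv Real.smoothTransition ((a + 2*δ - t)/δ)) ((a + 2*δ - t)/δ) :=
      ((hSTcd.differentiable (by simp)) _).hasDerivAt
    exact hST.comp t hin
  have hχ₂d : ∀ t : ℝ, HasDerivAt χ₂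
      (deriv Real.smoothTransition ((t - (a + 3*δ))/δ) * (1/δ)) t := by
    intro t
    have hin : HasDerivAt (fun s : ℝ => (s - (a + 3*δ))/δ) (1/δ) t := by
      simpa using ((hasDerivAt_id t).sub_const (a + 3*δ)).div_const δ
    have hST : HasDerivAt Real.smoothTransition
        (deriv Real.smoothTransition ((t - (a + 3*δ))/δ)) ((t - (a + 3*δ))/δ) :=
      ((hSTcd.differentiable (by simp)) _).hasDerivAt
    exact hST.comp t hin
  have hχ₁db : ∀ t : ℝ, |deriv χ₁ t| ≤ M * (1/δ) := by
    intro t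
    rw [(hχ₁d t).deriv, abs_mul]
    have h1 : |(-1:ℝ)/δ| = 1/δ := by
      rw [abs_div, abs_neg, abs_one, abs_of_pos hδ0]
    rw [h1]
    exact mul_le_mul_of_nonneg_right (hM _) (by positivity)
  have hχ₂db : ∀ t : ℝ, |deriv χ₂ t| ≤ M * (1/δ) := by
    intro t
    rw [(hχ₂d t).deriv, abs_mul]
    have h1 : |(1:ℝ)/δ| = 1/δ := by
      rw [abs_div, abs_one, abs_of_pos hδ0]
    rw [h1]
    exact mul_le_mul_of_nonneg_right (hM _) (by positivity)
  have hχ₁dz : ∀ t : ℝ, t ∉ Ioc (a + δ/2) (a + 2*δ) → deriv χ₁ t = 0 := by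
    intro t ht
    rw [mem_Ioc, not_and_or] at ht
    rcases ht with h | h
    · push_neg at h
      exact deriv_zero_on isOpen_Iio (show t ∈ Iio (a + δ) by
        simp only [mem_Iio]; linarith) (fun y hy => hχ₁one y (le_of_lt hy))
    · push_neg at h
      exact deriv_zero_on isOpen_Ioi (show t ∈ Ioi (a + 2*δ) by
        simp only [mem_Ioi]; linarith) (fun y hy => hχ₁zero y (le_of_lt hy))
  have hχ₂dz : ∀ t : ℝ, t ∉ Ioc (a + 5*δ/2) (a + 4*δ) → deriv χ₂ t = 0 := by
    intro t ht
    rw [mem_Ioc, not_and_or] at ht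
    rcases ht with h | h
    · push_neg at h
      exact deriv_zero_on isOpen_Iio (show t ∈ Iio (a + 3*δ) by
        simp only [mem_Iio]; linarith) (fun y hy => hχ₂zero y (le_of_lt hy))
    · push_neg at h
      exact deriv_zero_on isOpen_Ioi (show t ∈ Ioi (a + 4*δ) by
        simp only [mem_Ioi]; linarith) (fun y hy => hχ₂one y (le_of_lt hy))
  -- the two pieces
  set v₁ : EucN N → ℝ := fun z => χ₁ (z i) * u z with hv₁def
  set v₂ : EucN N → ℝ := fun z => χ₂ (z i) * u z with hv₂def
  have hv₁cd : ContDiff ℝ (⊤:ℕ∞) v₁ := cutoff_contDiff hsm hχ₁cd i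
  have hv₂cd : ContDiff ℝ (⊤:ℕ∞) v₂ := cutoff_contDiff hsm hχ₂cd i
  have hv₁cs : HasCompactSupport v₁ := cutoff_hasCompactSupport hcs i
  have hv₂cs : HasCompactSupport v₂ := cutoff_hasCompactSupport hcs i
  have hIv₁ : Integrable (fun z : EucN N => v₁ z ^ 2) volume :=
    sq_integrable hv₁cd.continuous hv₁cs
  have hIv₂ : Integrable (fun z : EucN N => v₂ z ^ 2) volume :=
    sq_integrable hv₂cd.continuous hv₂cs
  have hv₁supp : tsupport v₁ ⊆ tsupport u ∩ {z : EucN N | z i ≤ a + 2*δ} := by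
    apply closure_minimal
    · intro z hz
      rw [Function.mem_support] at hz
      constructor
      · apply subset_tsupport
        intro h0
        apply hz
        simp only [hv₁def, h0, mul_zero]
      · rw [mem_setOf_eq]
        by_contra hgt
        push_neg at hgt
        apply hz
        have h0 : χ₁ (z i) = 0 := hχ₁zero _ (le_of_lt hgt)
        simp only [hv₁def, h0, zero_mul]
    · exact (isClosed_tsupport u).inter (isClosed_le hcoord continuous_const)
  have hv₂supp : tsupport v₂ ⊆ tsupport u ∩ {z : EucN N | a + 3*δ ≤ z i} := by
    apply closure_minimal
    · intro z hz
      rw [Function.mem_support] at hz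
      constructor
      · apply subset_tsupport
        intro h0
        apply hz
        simp only [hv₂def, h0, mul_zero]
      · rw [mem_setOf_eq]
        by_contra hgt
        push_neg at hgt
        apply hz
        have h0 : χ₂ (z i) = 0 := hχ₂zero _ (le_of_lt hgt)
        simp only [hv₂def, h0, zero_mul]
    · exact (isClosed_tsupport u).inter (isClosed_le continuous_const hcoord)
  -- denominators
  have hden₁ : T/3 ≤ ∫ z, v₁ z ^ 2 := by
    have heq : F (a + δ/2) = ∫ z in {z : EucN N | z i ≤ a + δ/2}, v₁ z ^ 2 := by
      apply setIntegral_congr_fun (coord_meas i _)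
      intro z hz
      have h1 : χ₁ (z i) = 1 := hχ₁one _ (le_trans hz (by linarith))
      simp only [hv₁def, h1, one_mul]
    have hle : (∫ z in {z : EucN N | z i ≤ a + δ/2}, v₁ z ^ 2) ≤ ∫ z, v₁ z ^ 2 :=
      setIntegral_le_integral hIv₁ (Filter.Eventually.of_forall (fun z => sq_nonneg _))
    rw [heq] at hden1
    linarith
  have hden₂ : T/3 ≤ ∫ z, v₂ z ^ 2 := by
    have heq : (∫ z in {z : EucN N | a + 4*δ < z i}, u z ^ 2)
        = ∫ z in {z : EucN N | a + 4*δ < z i}, v₂ z ^ 2 := by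
      apply setIntegral_congr_fun (measurableSet_lt measurable_const (EuclideanSpace.proj (𝕜 := ℝ) i).continuous.measurable)
      intro z hz
      have h1 : χ₂ (z i) = 1 := hχ₂one _ (le_of_lt hz)
      simp only [hv₂def, h1, one_mul]
    have hle : (∫ z in {z : EucN N | a + 4*δ < z i}, v₂ z ^ 2) ≤ ∫ z, v₂ z ^ 2 :=
      setIntegral_le_integral hIv₂ (Filter.Eventually.of_forall (fun z => sq_nonneg _))
    rw [heq] at hden2
    linarith
  -- numerators
  have hJ₁int : Integrable (fun z : EucN N => (deriv χ₁ (z i))^2 * u z ^ 2) volume := by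
    apply Continuous.integrable_of_hasCompactSupport
    · exact (((hχ₁cd.continuous_deriv (by exact_mod_cast le_top)).comp
        (EuclideanSpace.proj (𝕜 := ℝ) i).continuous).pow 2).mul (hsm.continuous.pow 2)
    · apply HasCompactSupport.intro hcs
      intro x hx
      simp [image_eq_zero_of_notMem_tsupport hx]
  have hJ₂int : Integrable (fun z : EucN N => (deriv χ₂ (z i))^2 * u z ^ 2) volume := by
    apply Continuous.integrable_of_hasCompactSupport
    · exact (((hχ₂cd.continuous_deriv (by exact_mod_cast le_top)).comp
        (EuclideanSpace.proj (𝕜 := ℝ) i).continuous).pow 2).mul (hsm.continuous.pow 2)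
    · apply HasCompactSupport.intro hcs
      intro x hx
      simp [image_eq_zero_of_notMem_tsupport hx]
  have hnum₁ : (∫ z, gradSqE v₁ z) ≤ 2*E + 2*((M*(1/δ))^2 * (T/12)) := by
    have hstep1 : (∫ z, gradSqE v₁ z)
        ≤ ∫ z, (2 * gradSqE u z + 2 * ((deriv χ₁ (z i))^2 * u z ^ 2)) := by
      apply integral_mono (gradSq_integrable hv₁cd hv₁cs)
        (((gradSq_integrable hsm hcs).const_mul 2).add (hJ₁int.const_mul 2))
      intro z
      have h := cutoff_gradSq_le hsm hχ₁cd hχ₁ab i z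
      calc gradSqE v₁ z ≤ 2 * gradSqE u z + 2 * (deriv χ₁ (z i))^2 * (u z)^2 := h
        _ = 2 * gradSqE u z + 2 * ((deriv χ₁ (z i))^2 * u z ^ 2) := by ring
    have hstep2 : (∫ z, (2 * gradSqE u z + 2 * ((deriv χ₁ (z i))^2 * u z ^ 2)))
        = 2*E + 2 * ∫ z, (deriv χ₁ (z i))^2 * u z ^ 2 := by
      rw [integral_add ((gradSq_integrable hsm hcs).const_mul 2) (hJ₁int.const_mul 2),
        integral_const_mul, integral_const_mul]
    have hstep3 : (∫ z, (deriv χ₁ (z i))^2 * u z ^ 2) ≤ (M*(1/δ))^2 * (T/12) := by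
      have hBmeas : MeasurableSet {z : EucN N | a + δ/2 < z i ∧ z i ≤ a + 2*δ} :=
        coord_band_meas i _ _
      have hmono : (∫ z, (deriv χ₁ (z i))^2 * u z ^ 2)
          ≤ ∫ z, Set.indicator {z : EucN N | a + δ/2 < z i ∧ z i ≤ a + 2*δ}
              (fun z => (M*(1/δ))^2 * u z ^ 2) z := by
        apply integral_mono hJ₁int ((hIu.const_mul _).indicator hBmeas)
        intro z
        by_cases hz : z ∈ {z : EucN N | a + δ/2 < z i ∧ z i ≤ a + 2*δ}
        · rw [Set.indicator_of_mem hz]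
          apply mul_le_mul_of_nonneg_right _ (sq_nonneg _)
          have hb := hχ₁db (z i)
          nlinarith [abs_nonneg (deriv χ₁ (z i)), sq_abs (deriv χ₁ (z i))]
        · rw [Set.indicator_of_notMem hz]
          have hz' : z i ∉ Ioc (a + δ/2) (a + 2*δ) := by
            intro hc
            exact hz ⟨hc.1, hc.2⟩
          have h0 : deriv χ₁ (z i) = 0 := hχ₁dz _ hz'
          simp [h0]
      have heval : (∫ z, Set.indicator {z : EucN N | a + δ/2 < z i ∧ z i ≤ a + 2*δ}
            (fun z => (M*(1/δ))^2 * u z ^ 2) z)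
          = (M*(1/δ))^2 * (F (a + 2*δ) - F (a + δ/2)) := by
        rw [integral_indicator hBmeas, integral_const_mul]
        congr 1
        have hsp := setInt_split hIu i (show a + δ/2 ≤ a + 2*δ by linarith)
        simp only [hFdef]
        linarith
      rw [heval] at hmono
      have hfin : (M*(1/δ))^2 * (F (a + 2*δ) - F (a + δ/2)) ≤ (M*(1/δ))^2 * (T/12) :=
        mul_le_mul_of_nonneg_left hm1 (sq_nonneg _)
      linarith
    rw [hstep2] at hstep1
    linarith
  have hnum₂ : (∫ z, gradSqE v₂ z) ≤ 2*E + 2*((M*(1/δ))^2 * (T/12)) := by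
    have hstep1 : (∫ z, gradSqE v₂ z)
        ≤ ∫ z, (2 * gradSqE u z + 2 * ((deriv χ₂ (z i))^2 * u z ^ 2)) := by
      apply integral_mono (gradSq_integrable hv₂cd hv₂cs)
        (((gradSq_integrable hsm hcs).const_mul 2).add (hJ₂int.const_mul 2))
      intro z
      have h := cutoff_gradSq_le hsm hχ₂cd hχ₂ab i z
      calc gradSqE v₂ z ≤ 2 * gradSqE u z + 2 * (deriv χ₂ (z i))^2 * (u z)^2 := h
        _ = 2 * gradSqE u z + 2 * ((deriv χ₂ (z i))^2 * u z ^ 2) := by ring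
    have hstep2 : (∫ z, (2 * gradSqE u z + 2 * ((deriv χ₂ (z i))^2 * u z ^ 2)))
        = 2*E + 2 * ∫ z, (deriv χ₂ (z i))^2 * u z ^ 2 := by
      rw [integral_add ((gradSq_integrable hsm hcs).const_mul 2) (hJ₂int.const_mul 2),
        integral_const_mul, integral_const_mul]
    have hstep3 : (∫ z, (deriv χ₂ (z i))^2 * u z ^ 2) ≤ (M*(1/δ))^2 * (T/12) := by
      have hBmeas : MeasurableSet {z : EucN N | a + 5*δ/2 < z i ∧ z i ≤ a + 4*δ} :=
        coord_band_meas i _ _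
      have hmono : (∫ z, (deriv χ₂ (z i))^2 * u z ^ 2)
          ≤ ∫ z, Set.indicator {z : EucN N | a + 5*δ/2 < z i ∧ z i ≤ a + 4*δ}
              (fun z => (M*(1/δ))^2 * u z ^ 2) z := by
        apply integral_mono hJ₂int ((hIu.const_mul _).indicator hBmeas)
        intro z
        by_cases hz : z ∈ {z : EucN N | a + 5*δ/2 < z i ∧ z i ≤ a + 4*δ}
        · rw [Set.indicator_of_mem hz]
          apply mul_le_mul_of_nonneg_right _ (sq_nonneg _)
          have hb := hχ₂db (z i)
          nlinarith [abs_nonneg (deriv χ₂ (z i)), sq_abs (deriv χ₂ (z i))]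
        · rw [Set.indicator_of_notMem hz]
          have hz' : z i ∉ Ioc (a + 5*δ/2) (a + 4*δ) := by
            intro hc
            exact hz ⟨hc.1, hc.2⟩
          have h0 : deriv χ₂ (z i) = 0 := hχ₂dz _ hz'
          simp [h0]
      have heval : (∫ z, Set.indicator {z : EucN N | a + 5*δ/2 < z i ∧ z i ≤ a + 4*δ}
            (fun z => (M*(1/δ))^2 * u z ^ 2) z)
          = (M*(1/δ))^2 * (F (a + 4*δ) - F (a + 5*δ/2)) := by
        rw [integral_indicator hBmeas, integral_const_mul]
        congr 1
        have hsp := setInt_split hIu i (show a + 5*δ/2 ≤ a + 4*δ by linarith)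
        simp only [hFdef]
        linarith
      rw [heval] at hmono
      have hfin : (M*(1/δ))^2 * (F (a + 4*δ) - F (a + 5*δ/2)) ≤ (M*(1/δ))^2 * (T/12) :=
        mul_le_mul_of_nonneg_left hm2 (sq_nonneg _)
      linarith
    rw [hstep2] at hstep1
    linarith
  -- Rayleigh quotient bounds
  have hfact : 2*((M*(1/δ))^2 * (T/12)) = 96*M^2*(K+2)^2*T := by
    rw [h1δ]; ring
  have hnum₁' : (∫ z, gradSqE v₁ z) ≤ (2*(K+1) + 96*M^2*(K+2)^2) * T := by
    rw [hfact] at hnum₁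
    nlinarith
  have hnum₂' : (∫ z, gradSqE v₂ z) ≤ (2*(K+1) + 96*M^2*(K+2)^2) * T := by
    rw [hfact] at hnum₂
    nlinarith
  have hTne : T ≠ 0 := ne_of_gt hT0
  have hray₁ : rayleighE univ v₁ ≤ 3*(2*(K+1) + 96*M^2*(K+2)^2) := by
    have hreq : rayleighE univ v₁ = (∫ z, gradSqE v₁ z) / (∫ z, v₁ z ^ 2) := by
      unfold rayleighE
      rw [setIntegral_univ, setIntegral_univ]
    rw [hreq]
    have hnn : 0 ≤ (2*(K+1) + 96*M^2*(K+2)^2) * T :=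
      le_trans (integral_nonneg (gradSqE_nonneg v₁)) hnum₁'
    calc (∫ z, gradSqE v₁ z) / (∫ z, v₁ z ^ 2)
        ≤ ((2*(K+1) + 96*M^2*(K+2)^2) * T) / (T/3) :=
          div_le_div₀ hnn hnum₁' (by linarith) hden₁
      _ = 3*(2*(K+1) + 96*M^2*(K+2)^2) := by
          field_simp
  have hray₂ : rayleighE univ v₂ ≤ 3*(2*(K+1) + 96*M^2*(K+2)^2) := by
    have hreq : rayleighE univ v₂ = (∫ z, gradSqE v₂ z) / (∫ z, v₂ z ^ 2) := by
      unfold rayleighE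
      rw [setIntegral_univ, setIntegral_univ]
    rw [hreq]
    have hnn : 0 ≤ (2*(K+1) + 96*M^2*(K+2)^2) * T :=
      le_trans (integral_nonneg (gradSqE_nonneg v₂)) hnum₂'
    calc (∫ z, gradSqE v₂ z) / (∫ z, v₂ z ^ 2)
        ≤ ((2*(K+1) + 96*M^2*(K+2)^2) * T) / (T/3) :=
          div_le_div₀ hnn hnum₂' (by linarith) hden₂
      _ = 3*(2*(K+1) + 96*M^2*(K+2)^2) := by
          field_simp
  -- nonvanishing
  have hv₁ne : v₁ ≠ 0 := by
    intro h0
    have hzero : (∫ z, v₁ z ^ 2) = 0 := by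
      have h1 : (fun z : EucN N => v₁ z ^ 2) = fun _ => (0:ℝ) := by
        funext z
        rw [h0]
        simp
      rw [h1, integral_zero]
    rw [hzero] at hden₁
    linarith
  have hv₂ne : v₂ ≠ 0 := by
    intro h0
    have hzero : (∫ z, v₂ z ^ 2) = 0 := by
      have h1 : (fun z : EucN N => v₂ z ^ 2) = fun _ => (0:ℝ) := by
        funext z
        rw [h0]
        simp
      rw [h1, integral_zero]
    rw [hzero] at hden₂
    linarith
  -- the two open sets
  refine ⟨Ω ∩ {z : EucN N | z i < a + 5*δ/2}, Ω ∩ {z : EucN N | a + 5*δ/2 < z i},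
    hΩ.inter (isOpen_lt hcoord continuous_const),
    hΩ.inter (isOpen_lt continuous_const hcoord),
    inter_subset_left, inter_subset_left, ?_, ?_, ?_, ?_, ?_⟩
  · rw [Set.disjoint_left]
    rintro z ⟨-, h1⟩ ⟨-, h2⟩
    have h1' : z i < a + 5*δ/2 := h1
    have h2' : a + 5*δ/2 < z i := h2
    linarith
  · obtain ⟨z, hz⟩ : ∃ z : EucN N, v₁ z ≠ 0 := by
      by_contra hno
      push_neg at hno
      exact hv₁ne (funext hno)
    refine ⟨z, ?_⟩
    have hmem := hv₁supp (subset_tsupport _ hz)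
    exact ⟨hsub hmem.1, show z i < a + 5*δ/2 by
      have : z i ≤ a + 2*δ := hmem.2
      linarith⟩
  · obtain ⟨z, hz⟩ : ∃ z : EucN N, v₂ z ≠ 0 := by
      by_contra hno
      push_neg at hno
      exact hv₂ne (funext hno)
    refine ⟨z, ?_⟩
    have hmem := hv₂supp (subset_tsupport _ hz)
    exact ⟨hsub hmem.1, show a + 5*δ/2 < z i by
      have : a + 3*δ ≤ z i := hmem.2
      linarith⟩
  · have htest₁ : IsTestE (Ω ∩ {z : EucN N | z i < a + 5*δ/2}) v₁ := by
      refine ⟨hv₁cd, hv₁cs, ?_⟩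
      intro z hz
      obtain ⟨hz1, hz2⟩ := hv₁supp hz
      refine ⟨hsub hz1, show z i < a + 5*δ/2 from ?_⟩
      have : z i ≤ a + 2*δ := hz2
      linarith
    exact le_trans (eigen_le_rayleigh htest₁ hv₁ne) (by linarith)
  · have htest₂ : IsTestE (Ω ∩ {z : EucN N | a + 5*δ/2 < z i}) v₂ := by
      refine ⟨hv₂cd, hv₂cs, ?_⟩
      intro z hz
      obtain ⟨hz1, hz2⟩ := hv₂supp hz
      refine ⟨hsub hz1, show a + 5*δ/2 < z i from ?_⟩
      have : a + 3*δ ≤ z i := hz2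
      linarith
    exact le_trans (eigen_le_rayleigh htest₂ hv₂ne) (by linarith)

end SpectralMin
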